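/- For any real number θ < 1 and any positive integer j, the sum ∑_{k=j+1}^∞ (j/(k(k-1)))·(k/j)^θ is bounded below by (1+1/j)^{θ-1}·1/(1-θ) and bounded above by (1+1/j)·1/(1-θ). -/

import Mathlib

open Filter Finset Topology

/-- MVT bounds on differences of `x ^ (θ-1)`. -/
lemma rpow_diff_bounds (θ : ℝ) (hθ : θ < 1) (x : ℝ) (hx : 1 ≤ x) :
    (1 - θ) * (x + 1) ^ (θ - 2) ≤ x ^ (θ - 1) - (x + 1) ^ (θ - 1) ∧
      x ^ (θ - 1) - (x + 1) ^ (θ - 1) ≤ (1 - θ) * x ^ (θ - 2) := by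
  have hx0 : (0 : ℝ) < x := by linarith
  obtain ⟨c, hc, hc'⟩ := exists_hasDerivAt_eq_slope (fun y : ℝ => y ^ (θ - 1))
      (fun y : ℝ => (θ - 1) * y ^ (θ - 1 - 1)) (by linarith : x < x + 1)
      (fun y hy => by
        have hy0 : y ≠ 0 := by
          have : (0:ℝ) < y := lt_of_lt_of_le hx0 hy.1
          exact ne_of_gt this
        exact (Real.hasDerivAt_rpow_const (Or.inl hy0)).continuousAt.continuousWithinAt)
      (fun y hy => by
        have hy0 : y ≠ 0 := ne_of_gt (lt_trans hx0 hy.1)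
        exact Real.hasDerivAt_rpow_const (Or.inl hy0))
  have hc0 : 0 < c := lt_trans hx0 hc.1
  have hkey : x ^ (θ - 1) - (x + 1) ^ (θ - 1) = (1 - θ) * c ^ (θ - 2) := by
    have h1 : x + 1 - x = (1 : ℝ) := by ring
    rw [h1, div_one] at hc'
    have h2 : θ - 1 - 1 = θ - 2 := by ring
    rw [h2] at hc'
    nlinarith [hc']
  have hmono1 : (x + 1) ^ (θ - 2) ≤ c ^ (θ - 2) :=
    Real.rpow_le_rpow_of_nonpos hc0 hc.2.le (by linarith)
  have hmono2 : c ^ (θ - 2) ≤ x ^ (θ - 2) :=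
    Real.rpow_le_rpow_of_nonpos hx0 hc.1.le (by linarith)
  constructor
  · rw [hkey]; exact mul_le_mul_of_nonneg_left hmono1 (by linarith)
  · rw [hkey]; exact mul_le_mul_of_nonneg_left hmono2 (by linarith)

/-- The telescoping sum of `(k-1)^(θ-1) - k^(θ-1)` over `k ≥ j+1` equals `j^(θ-1)`. -/
lemma hasSum_telescope (θ : ℝ) (hθ : θ < 1) (j : ℕ) (hj : 1 ≤ j) :
    HasSum (fun k : ℕ => if j + 1 ≤ k then
        ((k : ℝ) - 1) ^ (θ - 1) - (k : ℝ) ^ (θ - 1) else 0) ((j : ℝ) ^ (θ - 1)) := by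
  have hj0 : (0 : ℝ) < j := by exact_mod_cast hj
  set d : ℕ → ℝ := fun k => if j + 1 ≤ k then
      ((k : ℝ) - 1) ^ (θ - 1) - (k : ℝ) ^ (θ - 1) else 0 with hd
  set g : ℕ → ℝ := fun n => ((j : ℝ) + n) ^ (θ - 1) with hg
  have hshift : ∀ n : ℕ, d (n + (j + 1)) = g n - g (n + 1) := by
    intro n
    have h1 : j + 1 ≤ n + (j + 1) := by omega
    simp only [hd, hg, if_pos h1]
    have h2 : ((n + (j + 1) : ℕ) : ℝ) - 1 = (j : ℝ) + n := by push_cast; ring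
    have h3 : ((n + (j + 1) : ℕ) : ℝ) = (j : ℝ) + (n + 1 : ℕ) := by push_cast; ring
    rw [h2, h3]
  have hgpos : ∀ n : ℕ, (0 : ℝ) < (j : ℝ) + n := fun n => by positivity
  have hnonneg : ∀ n : ℕ, 0 ≤ g n - g (n + 1) := by
    intro n
    have : g (n + 1) ≤ g n := by
      apply Real.rpow_le_rpow_of_nonpos (hgpos n) (by push_cast; linarith) (by linarith)
    linarith
  have htend : Tendsto (fun n : ℕ => g n) atTop (𝓝 0) := by
    have h1 : Tendsto (fun n : ℕ => (j : ℝ) + n) atTop atTop :=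
      tendsto_atTop_add_const_left _ _ tendsto_natCast_atTop_atTop
    have h2 : Tendsto (fun x : ℝ => x ^ (-(1 - θ))) atTop (𝓝 0) :=
      tendsto_rpow_neg_atTop (by linarith)
    have := h2.comp h1
    simpa [hg, neg_sub, Function.comp_def] using this
  have hsum : HasSum (fun n : ℕ => g n - g (n + 1)) (g 0) := by
    rw [hasSum_iff_tendsto_nat_of_nonneg hnonneg]
    have : ∀ n : ℕ, ∑ i ∈ range n, (g i - g (i + 1)) = g 0 - g n := by
      intro n; exact Finset.sum_range_sub' g n
    simp only [this]
    simpa using tendsto_const_nhds.sub htend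
  have hg0 : g 0 = (j : ℝ) ^ (θ - 1) := by simp [hg]
  have hsum2 : HasSum (fun n : ℕ => d (n + (j + 1))) ((j : ℝ) ^ (θ - 1)) := by
    rw [show (fun n : ℕ => d (n + (j + 1))) = fun n => g n - g (n + 1) from funext hshift]
    rwa [hg0] at hsum
  have hzero : ∑ i ∈ range (j + 1), d i = 0 := by
    apply Finset.sum_eq_zero
    intro i hi
    have : ¬ (j + 1 ≤ i) := by
      simp only [Finset.mem_range] at hi; omega
    simp only [hd, if_neg this]
  refine (hasSum_nat_add_iff' (j + 1)).mp ?_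
  rw [hzero, sub_zero]
  exact hsum2

/-- For any real `θ < 1` and integer `j ≥ 1`, the series
`∑_{k=j+1}^∞ (j/(k(k-1)))·(k/j)^θ` is bounded below by `(1+1/j)^(θ-1)·1/(1-θ)`
and above by `(1+1/j)·1/(1-θ)`. -/
theorem renyi_series_bounds (θ : ℝ) (hθ : θ < 1) (j : ℕ) (hj : 1 ≤ j) :
    (1 + 1 / (j : ℝ)) ^ (θ - 1) * (1 / (1 - θ)) ≤
      (∑' k : ℕ, if j + 1 ≤ k then
        (j : ℝ) / ((k : ℝ) * ((k : ℝ) - 1)) * ((k : ℝ) / (j : ℝ)) ^ θ else 0) ∧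
    (∑' k : ℕ, if j + 1 ≤ k then
        (j : ℝ) / ((k : ℝ) * ((k : ℝ) - 1)) * ((k : ℝ) / (j : ℝ)) ^ θ else 0) ≤
      (1 + 1 / (j : ℝ)) * (1 / (1 - θ)) := by
  have hj0 : (0 : ℝ) < j := by exact_mod_cast hj
  have hj1 : (1 : ℝ) ≤ j := by exact_mod_cast hj
  have h1θ : (0 : ℝ) < 1 - θ := by linarith
  set f : ℕ → ℝ := fun k => if j + 1 ≤ k then
      (j : ℝ) / ((k : ℝ) * ((k : ℝ) - 1)) * ((k : ℝ) / (j : ℝ)) ^ θ else 0 with hf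
  set d : ℕ → ℝ := fun k => if j + 1 ≤ k then
      ((k : ℝ) - 1) ^ (θ - 1) - (k : ℝ) ^ (θ - 1) else 0 with hd
  have hdsum := hasSum_telescope θ hθ j hj
  -- constants
  set CL : ℝ := (1 + 1 / (j : ℝ)) ^ (θ - 1) * (j : ℝ) ^ (1 - θ) / (1 - θ) with hCL
  set CU : ℝ := (1 + 1 / (j : ℝ)) * (j : ℝ) ^ (1 - θ) / (1 - θ) with hCU
  -- pointwise bounds
  have hbound : ∀ k : ℕ, CL * d k ≤ f k ∧ f k ≤ CU * d k := by
    intro k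
    by_cases hk : j + 1 ≤ k
    · have hk1 : (1 : ℝ) ≤ (k : ℝ) - 1 := by
        have : (j : ℝ) + 1 ≤ k := by exact_mod_cast hk
        linarith
      have hkx : (j : ℝ) ≤ (k : ℝ) - 1 := by
        have : (j : ℝ) + 1 ≤ k := by exact_mod_cast hk
        linarith
      set x : ℝ := (k : ℝ) - 1 with hx
      have hx0 : (0 : ℝ) < x := by linarith
      have hk0 : (0 : ℝ) < (k : ℝ) := by linarith [hk1]
      have hxk : x + 1 = (k : ℝ) := by rw [hx]; ring
      obtain ⟨hD1, hD2⟩ := rpow_diff_bounds θ hθ x hk1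
      rw [hxk] at hD1 hD2
      have hDval : d k = x ^ (θ - 1) - (k : ℝ) ^ (θ - 1) := by simp only [hd, if_pos hk, hx]
      -- f k = j^(1-θ) * k^(θ-1) / x
      have hfval : f k = (j : ℝ) ^ (1 - θ) * (k : ℝ) ^ (θ - 1) / x := by
        simp only [hf, if_pos hk, ← hx]
        rw [Real.div_rpow hk0.le hj0.le]
        rw [show (1 : ℝ) - θ = 1 + -θ by ring, Real.rpow_add hj0,
          show θ - 1 = θ + -1 by ring, Real.rpow_add hk0,
          Real.rpow_neg hj0.le, Real.rpow_neg hk0.le, Real.rpow_one, Real.rpow_one]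
        field_simp
      -- k^(θ-1) = k^(θ-2) * k
      have hsplit : (k : ℝ) ^ (θ - 1) = (k : ℝ) ^ (θ - 2) * k := by
        rw [show θ - 1 = (θ - 2) + 1 by ring, Real.rpow_add hk0, Real.rpow_one]
      have hratio : (k : ℝ) / x ≤ 1 + 1 / (j : ℝ) := by
        rw [div_le_iff₀ hx0]
        have h2 : (1 + 1 / (j : ℝ)) = ((j : ℝ) + 1) / j := by field_simp
        rw [h2, div_mul_eq_mul_div, le_div_iff₀ hj0]
        nlinarith [hkx]
      have hjb0 : (0 : ℝ) < 1 + 1 / (j : ℝ) := by positivity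
      constructor
      · -- lower bound: CL * d k ≤ f k
        -- k^(θ-1) = x^(θ-1) * (k/x)^(θ-1) ≥ x^(θ-1) * (1+1/j)^(θ-1)
        have hkx2 : (k : ℝ) = x * ((k : ℝ) / x) := by field_simp
        have hkrpow : (k : ℝ) ^ (θ - 1) = x ^ (θ - 1) * ((k : ℝ) / x) ^ (θ - 1) := by
          nth_rewrite 1 [hkx2]
          rw [Real.mul_rpow hx0.le (by positivity)]
        have hge : (1 + 1 / (j : ℝ)) ^ (θ - 1) ≤ ((k : ℝ) / x) ^ (θ - 1) :=
          Real.rpow_le_rpow_of_nonpos (by positivity) hratio (by linarith)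
        have hstep1 : (1 + 1 / (j : ℝ)) ^ (θ - 1) * x ^ (θ - 2) ≤ (k : ℝ) ^ (θ - 1) / x := by
          rw [hkrpow]
          have hx2 : x ^ (θ - 1) / x = x ^ (θ - 2) := by
            rw [show θ - 1 = (θ - 2) + 1 by ring, Real.rpow_add hx0, Real.rpow_one]
            field_simp
          calc (1 + 1 / (j : ℝ)) ^ (θ - 1) * x ^ (θ - 2)
              = x ^ (θ - 1) / x * (1 + 1 / (j : ℝ)) ^ (θ - 1) := by rw [hx2]; ring
            _ ≤ x ^ (θ - 1) / x * ((k : ℝ) / x) ^ (θ - 1) :=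
                mul_le_mul_of_nonneg_left hge (by positivity)
            _ = x ^ (θ - 1) * ((k : ℝ) / x) ^ (θ - 1) / x := by ring
        have hstep2 : (1 + 1 / (j : ℝ)) ^ (θ - 1) * (d k / (1 - θ)) ≤
            (1 + 1 / (j : ℝ)) ^ (θ - 1) * x ^ (θ - 2) := by
          apply mul_le_mul_of_nonneg_left _ (by positivity)
          rw [div_le_iff₀ h1θ, mul_comm, hDval]
          exact hD2
        rw [hfval, hCL, hDval]
        rw [hDval] at hstep2
        have hjp : (0 : ℝ) < (j : ℝ) ^ (1 - θ) := Real.rpow_pos_of_pos hj0 _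
        calc (1 + 1 / (j : ℝ)) ^ (θ - 1) * (j : ℝ) ^ (1 - θ) / (1 - θ) *
              (x ^ (θ - 1) - (k : ℝ) ^ (θ - 1))
            = (j : ℝ) ^ (1 - θ) * ((1 + 1 / (j : ℝ)) ^ (θ - 1) *
              ((x ^ (θ - 1) - (k : ℝ) ^ (θ - 1)) / (1 - θ))) := by ring
          _ ≤ (j : ℝ) ^ (1 - θ) * ((1 + 1 / (j : ℝ)) ^ (θ - 1) * x ^ (θ - 2)) :=
              mul_le_mul_of_nonneg_left hstep2 hjp.le
          _ ≤ (j : ℝ) ^ (1 - θ) * ((k : ℝ) ^ (θ - 1) / x) :=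
              mul_le_mul_of_nonneg_left hstep1 hjp.le
          _ = (j : ℝ) ^ (1 - θ) * (k : ℝ) ^ (θ - 1) / x := by ring
      · -- upper bound: f k ≤ CU * d k
        have hstep1 : (k : ℝ) ^ (θ - 1) / x ≤ (1 + 1 / (j : ℝ)) * (k : ℝ) ^ (θ - 2) := by
          have hkpos : 0 ≤ (k : ℝ) ^ (θ - 2) := Real.rpow_nonneg hk0.le _
          calc (k : ℝ) ^ (θ - 1) / x = (k : ℝ) ^ (θ - 2) * ((k : ℝ) / x) := by
                rw [hsplit]; ring
            _ ≤ (k : ℝ) ^ (θ - 2) * (1 + 1 / (j : ℝ)) :=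
                mul_le_mul_of_nonneg_left hratio hkpos
            _ = (1 + 1 / (j : ℝ)) * (k : ℝ) ^ (θ - 2) := by ring
        have hstep2 : (k : ℝ) ^ (θ - 2) ≤ d k / (1 - θ) := by
          rw [le_div_iff₀ h1θ, mul_comm, hDval]
          exact hD1
        rw [hfval, hCU, hDval]
        rw [hDval] at hstep2
        have hjp : (0 : ℝ) < (j : ℝ) ^ (1 - θ) := Real.rpow_pos_of_pos hj0 _
        calc (j : ℝ) ^ (1 - θ) * (k : ℝ) ^ (θ - 1) / x
            = (j : ℝ) ^ (1 - θ) * ((k : ℝ) ^ (θ - 1) / x) := by ring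
          _ ≤ (j : ℝ) ^ (1 - θ) * ((1 + 1 / (j : ℝ)) * (k : ℝ) ^ (θ - 2)) :=
              mul_le_mul_of_nonneg_left hstep1 hjp.le
          _ ≤ (j : ℝ) ^ (1 - θ) * ((1 + 1 / (j : ℝ)) *
              ((x ^ (θ - 1) - (k : ℝ) ^ (θ - 1)) / (1 - θ))) := by
              apply mul_le_mul_of_nonneg_left _ hjp.le
              exact mul_le_mul_of_nonneg_left hstep2 hjb0.le
          _ = (1 + 1 / (j : ℝ)) * (j : ℝ) ^ (1 - θ) / (1 - θ) *
              (x ^ (θ - 1) - (k : ℝ) ^ (θ - 1)) := by ring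
    · simp only [hf, hd, if_neg hk, mul_zero, le_refl, and_self]
  -- summability
  have hCU0 : 0 ≤ CU := by
    rw [hCU]; positivity
  have hfnonneg : ∀ k, 0 ≤ f k := by
    intro k
    by_cases hk : j + 1 ≤ k
    · have hk1 : (1 : ℝ) < (k : ℝ) := by
        have : (j : ℝ) + 1 ≤ k := by exact_mod_cast hk
        linarith
      simp only [hf, if_pos hk]
      have h1 : (0 : ℝ) < (k : ℝ) * ((k : ℝ) - 1) := by nlinarith
      positivity
    · simp only [hf, if_neg hk, le_refl]
  have hCUd : Summable (fun k => CU * d k) := (hdsum.summable).mul_left CU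
  have hfsummable : Summable f :=
    Summable.of_nonneg_of_le hfnonneg (fun k => (hbound k).2) hCUd
  have hCLd : Summable (fun k => CL * d k) := (hdsum.summable).mul_left CL
  have hCLsum : (∑' k, CL * d k) = CL * (j : ℝ) ^ (θ - 1) := (hdsum.mul_left CL).tsum_eq
  have hCUsum : (∑' k, CU * d k) = CU * (j : ℝ) ^ (θ - 1) := (hdsum.mul_left CU).tsum_eq
  have hcancel : (j : ℝ) ^ (1 - θ) * (j : ℝ) ^ (θ - 1) = 1 := by
    rw [← Real.rpow_add hj0]
    norm_num
  constructor
  · have h := Summable.tsum_le_tsum (fun k => (hbound k).1) hCLd hfsummable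
    rw [hCLsum] at h
    calc (1 + 1 / (j : ℝ)) ^ (θ - 1) * (1 / (1 - θ))
        = CL * (j : ℝ) ^ (θ - 1) := by
          have : CL * (j : ℝ) ^ (θ - 1) = (1 + 1 / (j : ℝ)) ^ (θ - 1) *
              ((j : ℝ) ^ (1 - θ) * (j : ℝ) ^ (θ - 1)) * (1 / (1 - θ)) := by
            rw [hCL]; ring
          rw [this, hcancel, mul_one]
      _ ≤ ∑' k, f k := h
  · have h := Summable.tsum_le_tsum (fun k => (hbound k).2) hfsummable hCUd
    rw [hCUsum] at h
    calc (∑' k, f k) ≤ CU * (j : ℝ) ^ (θ - 1) := h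
      _ = (1 + 1 / (j : ℝ)) * (1 / (1 - θ)) := by
          have : CU * (j : ℝ) ^ (θ - 1) = (1 + 1 / (j : ℝ)) *
              ((j : ℝ) ^ (1 - θ) * (j : ℝ) ^ (θ - 1)) * (1 / (1 - θ)) := by
            rw [hCU]; ring
          rw [this, hcancel, mul_one]
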